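/- For every prime p, the inequality e_p ≤ (p + 1)·log α / (2·log p) holds, where e_p = ν_p(P_{z(p)}) and α = 1 + √2. -/

import Mathlib

/-- The Pell sequence: `P 0 = 0`, `P 1 = 1`, `P (n+2) = 2 * P (n+1) + P n`. -/
def pell : ℕ → ℕ
  | 0 => 0
  | 1 => 1
  | n + 2 => 2 * pell (n + 1) + pell n

def pellQ : ℕ → ℕ
  | 0 => 1
  | 1 => 1
  | n + 2 => 2 * pellQ (n + 1) + pellQ n

lemma pell_step : ∀ n, pell (n+1) = pellQ n + pell n ∧ pellQ (n+1) = pellQ n + 2 * pell n := by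
  intro n
  induction n using Nat.twoStepInduction with
  | zero => simp [pell, pellQ]
  | one => simp [pell, pellQ]
  | more n ih1 ih2 =>
    show pell (n+3) = _ ∧ pellQ (n+3) = _
    rw [show n+3 = (n+1)+2 from rfl]
    rw [pell, pellQ, pell, pellQ]
    obtain ⟨a1, a2⟩ := ih1
    obtain ⟨b1, b2⟩ := ih2
    constructor <;> omega

lemma pell_succ (n : ℕ) : pell (n+1) = pellQ n + pell n := (pell_step n).1
lemma pellQ_succ (n : ℕ) : pellQ (n+1) = pellQ n + 2 * pell n := (pell_step n).2

def av : ℤ√2 := ⟨1, 1⟩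

lemma av_pow (n : ℕ) : av ^ n = ⟨(pellQ n : ℤ), (pell n : ℤ)⟩ := by
  induction n with
  | zero => simp [pellQ, pell]; rfl
  | succ n ih =>
    rw [pow_succ, ih, pell_succ, pellQ_succ]
    ext <;> simp [av, Zsqrtd.re_mul, Zsqrtd.im_mul] <;> push_cast <;> ring

lemma pellQ_sq (n : ℕ) : (pellQ n : ℤ)^2 = 2 * (pell n : ℤ)^2 + (-1)^n := by
  have h : (av ^ n).norm = (-1 : ℤ)^n := by
    induction n with
    | zero => simp
    | succ n ih => rw [pow_succ, Zsqrtd.norm_mul, ih, pow_succ]; norm_num [av, Zsqrtd.norm]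
  rw [av_pow n] at h
  simp [Zsqrtd.norm] at h
  ring_nf
  ring_nf at h
  linarith

lemma pell_add (m n : ℕ) : (pell (m+n) : ℤ) = pellQ m * pell n + pell m * pellQ n := by
  have h := av_pow (m + n)
  rw [pow_add, av_pow m, av_pow n] at h
  have := congrArg Zsqrtd.im h
  simpa [Zsqrtd.im_mul, mul_comm] using this.symm

lemma pellQ_pos (n : ℕ) : 0 < pellQ n := by
  induction n with
  | zero => simp [pellQ]
  | succ n ih => rw [pellQ_succ]; omega

lemma pell_pos {n : ℕ} (h : 0 < n) : 0 < pell n := by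
  obtain ⟨m, rfl⟩ := Nat.exists_eq_succ_of_ne_zero h.ne'
  rw [pell_succ]
  have := pellQ_pos m
  omega

lemma pell_add_nat (m n : ℕ) : pell (m+n) = pellQ m * pell n + pell m * pellQ n := by
  have := pell_add m n; exact_mod_cast this

lemma pell_two_mul (m : ℕ) : pell (2*m) = 2 * (pell m * pellQ m) := by
  have := pell_add_nat m m
  rw [show m + m = 2*m from by ring] at this
  rw [this]; ring

lemma coprime_pell_pellQ (n : ℕ) : Nat.Coprime (pell n) (pellQ n) := by
  have h := pellQ_sq n
  set g := Nat.gcd (pell n) (pellQ n) with hg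
  have h1 : (g:ℤ) ∣ pell n := Int.natCast_dvd_natCast.2 (Nat.gcd_dvd_left _ _)
  have h2 : (g:ℤ) ∣ pellQ n := Int.natCast_dvd_natCast.2 (Nat.gcd_dvd_right _ _)
  have h3 : (g:ℤ) ∣ (-1)^n := by
    have heq : ((-1:ℤ))^n = (pellQ n:ℤ)^2 - 2*(pell n:ℤ)^2 := by linarith
    rw [heq, sq, sq]
    exact dvd_sub (h2.mul_right _) ((h1.mul_right _).mul_left 2)
  have h4 : IsUnit (g:ℤ) := isUnit_of_dvd_unit h3 ((isUnit_one.neg).pow n)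
  have h5 : g = 1 := by
    rcases Int.isUnit_iff.1 h4 with h|h <;> omega
  exact h5

/-- The order of appearance of `n` in the Pell sequence: the smallest positive
integer `k` such that `n ∣ P k`. -/
noncomputable def zAppear (n : ℕ) : ℕ := sInf {k : ℕ | 0 < k ∧ n ∣ pell k}

lemma pell_dvd_pell_mul (m k : ℕ) : pell m ∣ pell (m * k) := by
  induction k with
  | zero => simp [pell]
  | succ k ih =>
    rw [Nat.mul_succ, pell_add_nat]
    exact dvd_add (dvd_mul_left _ _) (ih.mul_right _)

lemma not_dvd_pellQ {p n : ℕ} (hp : p.Prime) (h : p ∣ pell n) : ¬ p ∣ pellQ n := by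
  intro h2
  have := Nat.dvd_gcd h h2
  rw [coprime_pell_pellQ n] at this
  exact hp.one_lt.ne' (Nat.dvd_one.1 this)

lemma zAppear_dvd {p : ℕ} (hp : p.Prime) : ∀ k, p ∣ pell k → zAppear p ∣ k := by
  intro k
  induction k using Nat.strong_induction_on with
  | _ k ih =>
  intro hk
  rcases Nat.eq_zero_or_pos k with rfl|hk0
  · exact dvd_zero _
  have hne : {j : ℕ | 0 < j ∧ p ∣ pell j}.Nonempty := ⟨k, hk0, hk⟩
  have hz : 0 < zAppear p ∧ p ∣ pell (zAppear p) := Nat.sInf_mem hne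
  have hzle : zAppear p ≤ k := Nat.sInf_le ⟨hk0, hk⟩
  set z := zAppear p
  have heq : pell k = pellQ (k-z) * pell z + pell (k-z) * pellQ z := by
    have := pell_add_nat (k - z) z
    rwa [Nat.sub_add_cancel hzle] at this
  have hd1 : p ∣ pellQ (k-z) * pell z := hz.2.mul_left _
  have hd2 : p ∣ pell (k-z) * pellQ z := by
    have : p ∣ pellQ (k-z) * pell z + pell (k-z) * pellQ z := heq ▸ hk
    exact (Nat.dvd_add_right hd1).1 this
  have hd3 : p ∣ pell (k-z) :=
    (Nat.Coprime.dvd_of_dvd_mul_right (hp.coprime_iff_not_dvd.2 (not_dvd_pellQ hp hz.2)) hd2)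
  rcases Nat.eq_zero_or_pos (k - z) with h0|hpos
  · have : z = k := by omega
    exact this ▸ dvd_refl _
  · have := ih (k - z) (by omega) hd3
    exact (Nat.dvd_sub (dvd_refl z) (dvd_refl z)) |> fun _ => (Nat.dvd_add this (dvd_refl z)) |> fun h => by
      have h2 := Nat.dvd_add this (dvd_refl z)
      rwa [Nat.sub_add_cancel hzle] at h2

lemma exists_even_dvd {p : ℕ} (hp : p.Prime) (hodd : p ≠ 2) :
    ∃ n, 0 < n ∧ n ≤ p + 1 ∧ 2 ∣ n ∧ p ∣ pell n := by
  haveI : Fact p.Prime := ⟨hp⟩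
  have hp2 : Odd p := hp.odd_of_ne_two hodd
  have hp3 : 3 ≤ p := by
    rcases hp.two_le.lt_or_eq with h|h; omega; omega
  obtain ⟨m, hm⟩ : ∃ m, p = 2*m + 1 := hp2
  -- Euler's criterion-ish: 2^m ≡ ±1 mod p
  have h2ne : (2 : ZMod p) ≠ 0 := by
    intro h
    have := (ZMod.natCast_eq_zero_iff 2 p).1 (by exact_mod_cast h)
    have := Nat.le_of_dvd (by norm_num) this
    omega
  have hsq : ((2:ZMod p)^m) * ((2:ZMod p)^m) = 1 := by
    rw [← pow_add]
    have : m + m = p - 1 := by omega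
    rw [this]
    exact ZMod.pow_card_sub_one_eq_one h2ne
  have hpm : (2:ZMod p)^m = 1 ∨ (2:ZMod p)^m = -1 := mul_self_eq_one_iff.1 hsq
  -- turn into integer congruence
  obtain ⟨ε, hε1, hε2⟩ : ∃ ε : ℤ, (ε = 1 ∨ ε = -1) ∧ (p:ℤ) ∣ 2^m - ε := by
    rcases hpm with h|h
    · refine ⟨1, Or.inl rfl, ?_⟩
      have : ((2^m - 1 : ℤ) : ZMod p) = 0 := by push_cast; rw [h]; ring
      exact (ZMod.intCast_zmod_eq_zero_iff_dvd _ p).1 this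
    · refine ⟨-1, Or.inr rfl, ?_⟩
      have : ((2^m + 1 : ℤ) : ZMod p) = 0 := by push_cast; rw [h]; ring
      have h2 := (ZMod.intCast_zmod_eq_zero_iff_dvd _ p).1 this
      rw [sub_neg_eq_add]; exact h2
  obtain ⟨c, hc⟩ := hε2
  -- work in ℤ√2
  set s : ℤ√2 := ⟨0,1⟩ with hs
  have hav : av = ⟨1,1⟩ := rfl
  have hs2 : s^2 = 2 := by ext <;> simp [hs, sq, Zsqrtd.re_mul, Zsqrtd.im_mul]
  obtain ⟨r, hr⟩ : ∃ r : ℤ√2, (1 + s) ^ p = 1 ^ p + s ^ p + (p:ℤ√2) * r := by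
    obtain ⟨r, hr⟩ := exists_add_pow_prime_eq hp (1 : ℤ√2) s
    exact ⟨1 * s * r, by rw [hr]; ring⟩
  have hav1 : av = 1 + s := by ext <;> simp [hav, hs]
  have hsp : s ^ p = (2:ℤ√2)^m * s := by
    rw [hm, pow_succ, pow_mul, hs2]
  have h2m : (2:ℤ√2)^m = (ε : ℤ√2) + (p:ℤ√2) * (c:ℤ√2) := by
    have : ((2^m : ℤ) : ℤ√2) = ((ε + p * c : ℤ) : ℤ√2) := by
      rw [show (2^m : ℤ) = ε + p*c by linarith]
    push_cast at this
    exact_mod_cast this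
  have havp : av ^ p = 1 + (ε:ℤ√2) * s + (p:ℤ√2) * (r + (c:ℤ√2) * s) := by
    rw [hav1, hr, one_pow, hsp, h2m]; ring
  rcases hε1 with rfl|rfl
  · -- av^p = av + p * r₂, multiply by bv = ⟨-1,1⟩
    refine ⟨p - 1, by omega, by omega, by omega, ?_⟩
    set bv : ℤ√2 := ⟨-1,1⟩ with hbv
    have habv : av * bv = 1 := by ext <;> simp [hav, hbv, Zsqrtd.re_mul, Zsqrtd.im_mul]
    have key : av ^ (p-1) - 1 = (p:ℤ√2) * ((r + (c:ℤ√2)*s) * bv) := by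
      have h1 : av ^ p = av + (p:ℤ√2) * (r + (c:ℤ√2)*s) := by
        rw [havp, hav1]; push_cast; ring
      have h2 : av ^ p * bv = av ^ (p-1) := by
        nth_rewrite 1 [show p = (p-1) + 1 by omega]
        rw [pow_succ, mul_assoc, habv, mul_one]
      rw [← h2, h1, add_mul, habv, mul_assoc]; ring
    have hcast : ((p:ℤ) : ℤ√2) = (p : ℤ√2) := by push_cast; rfl
    have hdvd : ((p:ℤ) : ℤ√2) ∣ av ^ (p-1) - 1 := by
      rw [key, ← hcast]; exact dvd_mul_right _ _
    have := (Zsqrtd.intCast_dvd _ _).1 hdvd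
    have him := this.2
    rw [av_pow] at him
    simp [Zsqrtd.im_sub] at him
    exact_mod_cast him
  · -- av^p = 1 - s + p r₂ ; av^(p+1) = -1 + p r₃
    refine ⟨p + 1, by omega, le_refl _, by omega, ?_⟩
    have hconj : (1 - s) * av = -1 := by
      ext <;> simp [hav, hs, Zsqrtd.re_mul, Zsqrtd.im_mul, Zsqrtd.re_sub, Zsqrtd.im_sub]
    have key : av ^ (p+1) + 1 = (p:ℤ√2) * ((r + (c:ℤ√2)*s) * av) := by
      have h1 : av ^ p = (1 - s) + (p:ℤ√2) * (r + (c:ℤ√2)*s) := by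
        rw [havp]; push_cast; ring
      have h2 : av ^ (p+1) = av ^ p * av := by rw [pow_succ]
      rw [h2, h1, add_mul, hconj]; ring
    have hcast : ((p:ℤ) : ℤ√2) = (p : ℤ√2) := by push_cast; rfl
    have hdvd : ((p:ℤ) : ℤ√2) ∣ av ^ (p+1) + 1 := by
      rw [key, ← hcast]; exact dvd_mul_right _ _
    have := (Zsqrtd.intCast_dvd _ _).1 hdvd
    have him := this.2
    rw [av_pow] at him
    simp [Zsqrtd.im_add] at him
    exact_mod_cast him

lemma growth (n : ℕ) : ((pellQ n : ℝ)) + (pell n : ℝ) * Real.sqrt 2 = (1 + Real.sqrt 2)^n := by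
  have h2 : Real.sqrt 2 ^ 2 = 2 := Real.sq_sqrt (by norm_num)
  induction n with
  | zero => simp [pell, pellQ]
  | succ n ih =>
    rw [pow_succ, ← ih, pell_succ, pellQ_succ]
    push_cast
    linear_combination (-(pell n : ℝ)) * h2

lemma sqrt2_ge_one : (1:ℝ) ≤ Real.sqrt 2 := by
  rw [show (1:ℝ) = Real.sqrt 1 by simp]
  exact Real.sqrt_le_sqrt (by norm_num)

lemma pell_le (n : ℕ) : (pell n : ℝ) ≤ (1 + Real.sqrt 2)^n := by
  have h := growth n
  have h1 := sqrt2_ge_one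
  have h2 : (0:ℝ) ≤ (pellQ n : ℝ) := Nat.cast_nonneg _
  have h3 : (0:ℝ) ≤ (pell n : ℝ) := Nat.cast_nonneg _
  nlinarith

lemma pellQ_le (n : ℕ) : (pellQ n : ℝ) ≤ (1 + Real.sqrt 2)^n := by
  have h := growth n
  have h1 := sqrt2_ge_one
  have h3 : (0:ℝ) ≤ (pell n : ℝ) := Nat.cast_nonneg _
  nlinarith

lemma not_dvd_pell {p n : ℕ} (hp : p.Prime) (h : p ∣ pellQ n) : ¬ p ∣ pell n := by
  intro h2
  have := Nat.dvd_gcd h2 h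
  rw [coprime_pell_pellQ n] at this
  exact hp.one_lt.ne' (Nat.dvd_one.1 this)

/-- For every prime `p`, `e p ≤ (p + 1) log α / (2 log p)`, where
`e p = ν_p(P (z p))` and `α = 1 + √2`. -/
theorem e_p_bound (p : ℕ) (hp : p.Prime) :
    (padicValNat p (pell (zAppear p)) : ℝ) ≤
      ((p : ℝ) + 1) * Real.log (1 + Real.sqrt 2) / (2 * Real.log p) := by
  have hα : (1:ℝ) < 1 + Real.sqrt 2 := by
    have := sqrt2_ge_one; linarith
  have hL : 0 < Real.log (1 + Real.sqrt 2) := Real.log_pos hα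
  have hlogp : 0 < Real.log p := Real.log_pos (by exact_mod_cast hp.one_lt)
  by_cases hp2 : p = 2
  · -- p = 2 : zAppear 2 = 2, value 1
    subst hp2
    have hmem : 2 ∈ {k : ℕ | 0 < k ∧ 2 ∣ pell k} := ⟨by norm_num, by norm_num [pell]⟩
    have hz : zAppear 2 = 2 := by
      refine le_antisymm (Nat.sInf_le hmem) ?_
      have hne : {k : ℕ | 0 < k ∧ 2 ∣ pell k}.Nonempty := ⟨2, hmem⟩
      have h1 := Nat.sInf_mem hne
      have hlb : ∀ k ∈ {k : ℕ | 0 < k ∧ 2 ∣ pell k}, 2 ≤ k := by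
        rintro (_|_|k) hk
        · exact absurd hk.1 (lt_irrefl 0)
        · exact absurd hk.2 (by simp [pell])
        · omega
      exact hlb _ h1
    rw [hz]
    have hpv : padicValNat 2 (pell 2) = 1 := by
      norm_num [pell]
    rw [hpv]
    rw [le_div_iff₀ (by positivity)]
    have hlog2 : Real.log 2 ≤ Real.log (1 + Real.sqrt 2) := by
      apply Real.log_le_log (by norm_num)
      have := sqrt2_ge_one; linarith
    push_cast
    nlinarith [Real.log_pos (show (1:ℝ) < 2 by norm_num)]
  · -- p odd
    obtain ⟨n, hn0, hnle, hneven, hpdvd⟩ := exists_even_dvd hp hp2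
    obtain ⟨m, rfl⟩ := hneven
    have hm0 : 0 < m := by omega
    set z := zAppear p with hzdef
    have hne : {k : ℕ | 0 < k ∧ p ∣ pell k}.Nonempty := ⟨2*m, hn0, hpdvd⟩
    have hzmem : 0 < z ∧ p ∣ pell z := Nat.sInf_mem hne
    have hzdvd : z ∣ 2*m := zAppear_dvd hp _ hpdvd
    set e := padicValNat p (pell z) with hedef
    have hpe : p ^ e ∣ pell z := pow_padicValNat_dvd
    have hpell_dvd : pell z ∣ pell (2*m) := by
      obtain ⟨t, ht⟩ := hzdvd
      rw [ht]
      exact pell_dvd_pell_mul z t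
    have h1 : p ^ e ∣ 2 * (pell m * pellQ m) := by
      rw [← pell_two_mul]
      exact hpe.trans hpell_dvd
    have hcop2 : Nat.Coprime (p^e) 2 :=
      Nat.Coprime.pow_left _ ((Nat.coprime_primes hp Nat.prime_two).2 hp2)
    have h2 : p ^ e ∣ pell m * pellQ m := hcop2.dvd_of_dvd_mul_left h1
    -- split
    have h3 : p ^ e ∣ pell m ∨ p ^ e ∣ pellQ m := by
      rcases Nat.eq_zero_or_pos e with he|he
      · left; simp [he]
      · have hpd : p ∣ pell m * pellQ m := (dvd_pow_self p he.ne').trans h2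
        rcases (Nat.Prime.dvd_mul hp).1 hpd with h|h
        · left
          exact (Nat.Coprime.pow_left e (hp.coprime_iff_not_dvd.2 (not_dvd_pellQ hp h))).dvd_of_dvd_mul_right h2
        · right
          exact (Nat.Coprime.pow_left e (hp.coprime_iff_not_dvd.2 (not_dvd_pell hp h))).dvd_of_dvd_mul_left h2
    have h4 : ((p:ℝ)) ^ e ≤ (1 + Real.sqrt 2) ^ m := by
      rcases h3 with h|h
      · have := Nat.le_of_dvd (pell_pos hm0) h
        calc ((p:ℝ))^e = ((p^e : ℕ) : ℝ) := by push_cast; ring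
        _ ≤ (pell m : ℝ) := by exact_mod_cast this
        _ ≤ _ := pell_le m
      · have := Nat.le_of_dvd (pellQ_pos m) h
        calc ((p:ℝ))^e = ((p^e : ℕ) : ℝ) := by push_cast; ring
        _ ≤ (pellQ m : ℝ) := by exact_mod_cast this
        _ ≤ _ := pellQ_le m
    have h5 : (e:ℝ) * Real.log p ≤ (m:ℝ) * Real.log (1 + Real.sqrt 2) := by
      have hppos : (0:ℝ) < (p:ℝ) := by exact_mod_cast hp.pos
      calc (e:ℝ) * Real.log p = Real.log ((p:ℝ)^e) := by rw [Real.log_pow]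
      _ ≤ Real.log ((1 + Real.sqrt 2)^m) := Real.log_le_log (by positivity) h4
      _ = (m:ℝ) * Real.log (1 + Real.sqrt 2) := by rw [Real.log_pow]
    have hm : (2:ℝ) * m ≤ (p:ℝ) + 1 := by exact_mod_cast hnle
    rw [le_div_iff₀ (by positivity)]
    nlinarith
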